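/- Suppose V has dimension 3 over ℝ. Then for all elements U, V of the Clifford algebra Cl(Q), one has U·V + reverse(involute(U·V)) = V·U + reverse(involute(V·U)) (in dimension 3 this element equals twice the common projection of UV and VU onto the center of Cl(Q)). -/

import Mathlib

open CliffordAlgebra

section StmtAux

variable {M : Type*} [AddCommGroup M] [Module ℝ M] {Q : QuadraticForm ℝ M}

private lemma conj_mul' (x y : CliffordAlgebra Q) :
    reverse (involute (x * y)) = reverse (involute y) * reverse (involute x) := by
  rw [map_mul, reverse.map_mul]

private lemma conj_ι' (m : M) : reverse (involute (ι Q m)) = -ι Q m := by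
  rw [involute_ι, map_neg, reverse_ι]

set_option maxHeartbeats 800000 in
/-- Multiplication by a generator preserves the span of the eight monomials. -/
private lemma mul_mem_aux (a b c : CliffordAlgebra Q) (q0 q1 q2 : ℝ)
    (hba : b * a = -(a * b)) (hca : c * a = -(a * c)) (hcb : c * b = -(b * c))
    (haa : a * a = q0 • (1 : CliffordAlgebra Q))
    (hbb : b * b = q1 • (1 : CliffordAlgebra Q))
    (hcc : c * c = q2 • (1 : CliffordAlgebra Q))
    (hba' : ∀ y : CliffordAlgebra Q, b * (a * y) = -(a * (b * y)))
    (hca' : ∀ y : CliffordAlgebra Q, c * (a * y) = -(a * (c * y)))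
    (hcb' : ∀ y : CliffordAlgebra Q, c * (b * y) = -(b * (c * y)))
    (haa' : ∀ y : CliffordAlgebra Q, a * (a * y) = q0 • y)
    (hbb' : ∀ y : CliffordAlgebra Q, b * (b * y) = q1 • y)
    (hcc' : ∀ y : CliffordAlgebra Q, c * (c * y) = q2 • y)
    (W : Submodule ℝ (CliffordAlgebra Q))
    (m1 : (1 : CliffordAlgebra Q) ∈ W) (ma : a ∈ W) (mb : b ∈ W) (mc : c ∈ W)
    (mab : a * b ∈ W) (mac : a * c ∈ W) (mbc : b * c ∈ W) (mabc : a * (b * c) ∈ W)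
    (g z : CliffordAlgebra Q)
    (hg : g ∈ ({a, b, c} : Set (CliffordAlgebra Q)))
    (hz : z ∈ ({1, a, b, c, a * b, a * c, b * c, a * (b * c)} : Set (CliffordAlgebra Q))) :
    g * z ∈ W := by
  simp only [Set.mem_insert_iff, Set.mem_singleton_iff] at hz hg
  rcases hg with rfl | rfl | rfl <;>
    rcases hz with rfl | rfl | rfl | rfl | rfl | rfl | rfl | rfl <;>
    (try simp only [mul_assoc, hba, hca, hcb, hba', hca', hcb', haa, hbb, hcc,
      haa', hbb', hcc', mul_neg, neg_neg, mul_smul_comm, smul_smul, mul_one, one_mul]) <;>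
    solve_by_elim [neg_mem, Submodule.smul_mem]

set_option maxHeartbeats 800000 in
/-- Each monomial plus its Clifford conjugate commutes with the generators. -/
private lemma comm_aux (a b c : CliffordAlgebra Q) (q0 q1 q2 : ℝ)
    (hba : b * a = -(a * b)) (hca : c * a = -(a * c)) (hcb : c * b = -(b * c))
    (haa : a * a = q0 • (1 : CliffordAlgebra Q))
    (hbb : b * b = q1 • (1 : CliffordAlgebra Q))
    (hcc : c * c = q2 • (1 : CliffordAlgebra Q))
    (hba' : ∀ y : CliffordAlgebra Q, b * (a * y) = -(a * (b * y)))
    (hca' : ∀ y : CliffordAlgebra Q, c * (a * y) = -(a * (c * y)))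
    (hcb' : ∀ y : CliffordAlgebra Q, c * (b * y) = -(b * (c * y)))
    (haa' : ∀ y : CliffordAlgebra Q, a * (a * y) = q0 • y)
    (hbb' : ∀ y : CliffordAlgebra Q, b * (b * y) = q1 • y)
    (hcc' : ∀ y : CliffordAlgebra Q, c * (c * y) = q2 • y)
    (hconja : reverse (involute a) = -a)
    (hconjb : reverse (involute b) = -b)
    (hconjc : reverse (involute c) = -c)
    (g z : CliffordAlgebra Q)
    (hg : g ∈ ({a, b, c} : Set (CliffordAlgebra Q)))
    (hz : z ∈ ({1, a, b, c, a * b, a * c, b * c, a * (b * c)} : Set (CliffordAlgebra Q))) :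
    g * (z + reverse (involute z)) = (z + reverse (involute z)) * g := by
  simp only [Set.mem_insert_iff, Set.mem_singleton_iff] at hz hg
  rcases hg with rfl | rfl | rfl <;>
    rcases hz with rfl | rfl | rfl | rfl | rfl | rfl | rfl | rfl <;>
      simp only [conj_mul', hconja, hconjb, hconjc, map_one, reverse.map_one,
        mul_neg, neg_mul, neg_neg, mul_add, add_mul, mul_assoc, hba, hca, hcb,
        hba', hca', hcb', haa, hbb, hcc, haa', hbb', hcc', mul_smul_comm,
        smul_mul_assoc, smul_smul, mul_one, one_mul, add_neg_cancel,
        neg_add_cancel, mul_zero, zero_mul, smul_add, smul_neg]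

set_option maxHeartbeats 800000 in
private lemma central_aux (a b c : CliffordAlgebra Q) (q0 q1 q2 : ℝ)
    (hba : b * a = -(a * b)) (hca : c * a = -(a * c)) (hcb : c * b = -(b * c))
    (haa : a * a = q0 • (1 : CliffordAlgebra Q))
    (hbb : b * b = q1 • (1 : CliffordAlgebra Q))
    (hcc : c * c = q2 • (1 : CliffordAlgebra Q))
    (hconja : reverse (involute a) = -a)
    (hconjb : reverse (involute b) = -b)
    (hconjc : reverse (involute c) = -c)
    (hgen : ∀ m' : M, ∃ r0 r1 r2 : ℝ, ι Q m' = r0 • a + r1 • b + r2 • c)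
    (x : CliffordAlgebra Q) (m : M) :
    ι Q m * (x + reverse (involute x)) = (x + reverse (involute x)) * ι Q m := by
  have hba' : ∀ y : CliffordAlgebra Q, b * (a * y) = -(a * (b * y)) := fun y => by
    rw [← mul_assoc, hba, neg_mul, mul_assoc]
  have hca' : ∀ y : CliffordAlgebra Q, c * (a * y) = -(a * (c * y)) := fun y => by
    rw [← mul_assoc, hca, neg_mul, mul_assoc]
  have hcb' : ∀ y : CliffordAlgebra Q, c * (b * y) = -(b * (c * y)) := fun y => by
    rw [← mul_assoc, hcb, neg_mul, mul_assoc]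
  have haa' : ∀ y : CliffordAlgebra Q, a * (a * y) = q0 • y := fun y => by
    rw [← mul_assoc, haa, smul_mul_assoc, one_mul]
  have hbb' : ∀ y : CliffordAlgebra Q, b * (b * y) = q1 • y := fun y => by
    rw [← mul_assoc, hbb, smul_mul_assoc, one_mul]
  have hcc' : ∀ y : CliffordAlgebra Q, c * (c * y) = q2 • y := fun y => by
    rw [← mul_assoc, hcc, smul_mul_assoc, one_mul]
  obtain ⟨W, hWdef⟩ : ∃ W : Submodule ℝ (CliffordAlgebra Q), W = Submodule.span ℝ
      ({1, a, b, c, a * b, a * c, b * c, a * (b * c)} : Set (CliffordAlgebra Q)) := ⟨_, rfl⟩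
  have hWmem : ∀ u ∈ ({1, a, b, c, a * b, a * c, b * c, a * (b * c)} :
      Set (CliffordAlgebra Q)), u ∈ W := fun u hu => hWdef ▸ Submodule.subset_span hu
  have m1 : (1 : CliffordAlgebra Q) ∈ W := hWmem _ (by simp)
  have ma : a ∈ W := hWmem _ (by simp)
  have mb : b ∈ W := hWmem _ (by simp)
  have mc : c ∈ W := hWmem _ (by simp)
  have mab : a * b ∈ W := hWmem _ (by simp)
  have mac : a * c ∈ W := hWmem _ (by simp)
  have mbc : b * c ∈ W := hWmem _ (by simp)
  have mabc : a * (b * c) ∈ W := hWmem _ (by simp)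
  -- W is closed under left multiplication by a, b, c
  have hmul : ∀ g ∈ ({a, b, c} : Set (CliffordAlgebra Q)), ∀ y ∈ W, g * y ∈ W := by
    intro g hg y hy
    rw [hWdef] at hy
    induction hy using Submodule.span_induction with
    | mem z hz =>
      exact mul_mem_aux a b c q0 q1 q2 hba hca hcb haa hbb hcc hba' hca' hcb' haa' hbb' hcc'
        W m1 ma mb mc mab mac mbc mabc g z hg hz
    | zero => simp only [mul_zero]; exact zero_mem W
    | add u v hu hv ihu ihv => rw [mul_add]; exact add_mem ihu ihv
    | smul r u hu ihu => rw [mul_smul_comm]; exact Submodule.smul_mem _ _ ihu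
  -- every element lies in W
  have htop : ∀ y : CliffordAlgebra Q, y ∈ W := by
    have hadj : ∀ y : CliffordAlgebra Q, y ∈ Algebra.adjoin ℝ ({a, b, c} : Set _) := by
      intro y
      induction y using CliffordAlgebra.induction with
      | algebraMap r => exact Subalgebra.algebraMap_mem _ r
      | ι m' =>
        obtain ⟨r0, r1, r2, hr⟩ := hgen m'
        rw [hr]
        have hma : a ∈ Algebra.adjoin ℝ ({a, b, c} : Set _) :=
          Algebra.subset_adjoin (by simp)
        have hmb : b ∈ Algebra.adjoin ℝ ({a, b, c} : Set _) :=
          Algebra.subset_adjoin (by simp)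
        have hmc : c ∈ Algebra.adjoin ℝ ({a, b, c} : Set _) :=
          Algebra.subset_adjoin (by simp)
        exact add_mem (add_mem (Subalgebra.smul_mem _ hma _) (Subalgebra.smul_mem _ hmb _))
          (Subalgebra.smul_mem _ hmc _)
      | mul u v hu hv => exact mul_mem hu hv
      | add u v hu hv => exact add_mem hu hv
    intro y
    have hy := hadj y
    rw [← Subalgebra.mem_toSubmodule, Algebra.adjoin_eq_span] at hy
    refine Submodule.span_le.mpr ?_ hy
    intro z hz
    refine Submonoid.closure_induction_left (motive := fun u _ => u ∈ W) m1 ?_ hz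
    intro g hg y' hy' ih
    exact hmul g hg y' ih
  -- commuting with a, b, c implies commuting with all of ι
  have hcomm : ∀ z : CliffordAlgebra Q, a * z = z * a → b * z = z * b → c * z = z * c →
      ∀ m', ι Q m' * z = z * ι Q m' := by
    intro z hza hzb hzc m'
    obtain ⟨r0, r1, r2, hr⟩ := hgen m'
    rw [hr, add_mul, add_mul, mul_add, mul_add, smul_mul_assoc, smul_mul_assoc,
      smul_mul_assoc, mul_smul_comm, mul_smul_comm, mul_smul_comm, hza, hzb, hzc]
  -- main statement for elements of W
  have hP : ∀ y ∈ W, ∀ m', ι Q m' * (y + reverse (involute y))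
      = (y + reverse (involute y)) * ι Q m' := by
    intro y hy
    rw [hWdef] at hy
    induction hy using Submodule.span_induction with
    | mem z hz =>
      refine fun m' => hcomm _ ?_ ?_ ?_ m' <;>
        exact comm_aux a b c q0 q1 q2 hba hca hcb haa hbb hcc hba' hca' hcb' haa' hbb' hcc'
          hconja hconjb hconjc _ z (by simp) hz
    | zero => intro m'; simp
    | add u v hu hv ihu ihv =>
      intro m'
      rw [map_add, map_add, add_add_add_comm, mul_add, add_mul, ihu m', ihv m']
    | smul r u hu ihu =>
      intro m'
      rw [map_smul, map_smul, ← smul_add, mul_smul_comm, smul_mul_assoc, ihu m']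
  exact hP x (htop x) m

set_option maxHeartbeats 800000 in
private lemma key_lemma (h : Module.finrank ℝ M = 3) (x : CliffordAlgebra Q) (m : M) :
    ι Q m * (x + reverse (involute x)) = (x + reverse (involute x)) * ι Q m := by
  have : FiniteDimensional ℝ M := FiniteDimensional.of_finrank_pos (by omega)
  obtain ⟨w0, hw0⟩ := LinearMap.BilinForm.exists_orthogonal_basis
    (QuadraticForm.associated_isSymm ℝ Q)
  let w : Module.Basis (Fin 3) ℝ M := w0.reindex (finCongr h)
  have hwa : ∀ i, w i = w0 ((finCongr h).symm i) := fun i => w0.reindex_apply _ i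
  have hw : ∀ i j : Fin 3, i ≠ j → Q.IsOrtho (w i) (w j) := by
    intro i j hij
    rw [hwa, hwa, ← QuadraticMap.associated_isOrtho]
    exact hw0 ((finCongr h).symm.injective.ne hij)
  refine central_aux (ι Q (w 0)) (ι Q (w 1)) (ι Q (w 2)) (Q (w 0)) (Q (w 1)) (Q (w 2))
    (ι_mul_ι_comm_of_isOrtho (hw 1 0 (by decide)))
    (ι_mul_ι_comm_of_isOrtho (hw 2 0 (by decide)))
    (ι_mul_ι_comm_of_isOrtho (hw 2 1 (by decide)))
    (by rw [ι_sq_scalar, Algebra.algebraMap_eq_smul_one])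
    (by rw [ι_sq_scalar, Algebra.algebraMap_eq_smul_one])
    (by rw [ι_sq_scalar, Algebra.algebraMap_eq_smul_one])
    (conj_ι' _) (conj_ι' _) (conj_ι' _) ?_ x m
  intro m'
  refine ⟨w.repr m' 0, w.repr m' 1, w.repr m' 2, ?_⟩
  conv_lhs => rw [← w.sum_repr m']
  rw [map_sum, Fin.sum_univ_three, map_smul, map_smul, map_smul]

end StmtAux

theorem stmt_6 {M : Type*} [AddCommGroup M] [Module ℝ M] (Q : QuadraticForm ℝ M)
    (h : Module.finrank ℝ M = 3) (U V : CliffordAlgebra Q) :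
    U * V + reverse (involute (U * V)) = V * U + reverse (involute (V * U)) := by
  have H : ∀ X Y : CliffordAlgebra Q,
      X * Y + reverse (involute (X * Y)) = Y * X + reverse (involute (Y * X)) := by
    intro X
    induction X using CliffordAlgebra.induction with
    | algebraMap r =>
      intro Y
      rw [conj_mul', conj_mul']
      have h1 : reverse (involute (algebraMap ℝ (CliffordAlgebra Q) r)) =
          algebraMap ℝ (CliffordAlgebra Q) r := by
        rw [AlgHom.commutes, reverse.commutes]
      rw [h1, ← Algebra.commutes r Y, ← Algebra.commutes r (reverse (involute Y)),
        Algebra.commutes r (reverse (involute Y))]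
    | ι m =>
      intro Y
      have hk := key_lemma h Y m
      rw [mul_add, add_mul] at hk
      rw [conj_mul', conj_mul', conj_ι', mul_neg, neg_mul, ← sub_eq_add_neg, ← sub_eq_add_neg,
        sub_eq_sub_iff_add_eq_add]
      exact hk
    | mul a b ha hb =>
      intro Y
      calc a * b * Y + reverse (involute (a * b * Y))
          = a * (b * Y) + reverse (involute (a * (b * Y))) := by rw [mul_assoc]
        _ = (b * Y) * a + reverse (involute ((b * Y) * a)) := ha _
        _ = b * (Y * a) + reverse (involute (b * (Y * a))) := by rw [mul_assoc]
        _ = (Y * a) * b + reverse (involute ((Y * a) * b)) := hb _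
        _ = Y * (a * b) + reverse (involute (Y * (a * b))) := by rw [mul_assoc]
    | add a b ha hb =>
      intro Y
      rw [add_mul, mul_add, map_add, map_add, map_add, map_add,
        add_add_add_comm, ha Y, hb Y, add_add_add_comm]
  exact H U V
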